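/- For every integer N ≥ 1, the polynomial P_N + P_{N+1}, where P_n denotes the n-th Legendre polynomial, has N+1 pairwise distinct real roots, all lying in the half-open interval [−1, 1); in particular, x = −1 is one of these roots. -/

import Mathlib

open Polynomial

lemma iter_deriv_add (p q : Polynomial ℝ) (n : ℕ) :
    derivative^[n] (p + q) = derivative^[n] p + derivative^[n] q := by
  induction n generalizing p q with
  | zero => simp
  | succ n ih => simp [Function.iterate_succ_apply, derivative_add, ih]

lemma iter_deriv_X_mul (g : Polynomial ℝ) (n : ℕ) :
    derivative^[n + 1] (X * g) =
      X * derivative^[n + 1] g + C ((n + 1 : ℕ) : ℝ) * derivative^[n] g := by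
  induction n generalizing g with
  | zero => simp [derivative_mul]; ring
  | succ n ih =>
      rw [Function.iterate_succ_apply, derivative_mul, derivative_X, one_mul,
        iter_deriv_add, ih (derivative g),
        ← Function.iterate_succ_apply, ← Function.iterate_succ_apply]
      simp only [Nat.succ_eq_add_one]
      push_cast
      simp only [C_add, C_1, map_ofNat]
      ring

lemma factor_iter (N : ℕ) : ∀ k, k ≤ N →
    ∃ g : Polynomial ℝ, derivative^[k] ((X ^ 2 - 1) ^ N * (X + 1)) =
      (X - 1) ^ (N - k) * (X + 1) ^ (N + 1 - k) * g := by
  intro k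
  induction k with
  | zero =>
      intro _
      refine ⟨1, ?_⟩
      have h : (X ^ 2 - 1 : Polynomial ℝ) = (X - 1) * (X + 1) := by ring
      rw [Function.iterate_zero_apply, h, mul_pow]
      simp only [Nat.sub_zero]
      rw [pow_succ]
      ring
  | succ k ih =>
      intro hk
      obtain ⟨g, hg⟩ := ih (by omega)
      obtain ⟨a, ha⟩ : ∃ a, N - k = a + 1 := ⟨N - (k + 1), by omega⟩
      have ha2 : N + 1 - k = a + 2 := by omega
      have ha3 : N - (k + 1) = a := by omega
      have ha4 : N + 1 - (k + 1) = a + 1 := by omega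
      refine ⟨C ((a : ℝ) + 1) * (X + 1) * g + C ((a : ℝ) + 2) * (X - 1) * g
        + (X - 1) * (X + 1) * derivative g, ?_⟩
      rw [Function.iterate_succ_apply', hg, ha, ha2, ha3, ha4,
        derivative_mul, derivative_mul, derivative_pow_succ, derivative_pow_succ]
      simp only [derivative_sub, derivative_add, derivative_X, derivative_one,
        sub_zero, add_zero, mul_one]
      push_cast
      ring

/-- The `n`-th Legendre polynomial, via Rodrigues' formula:
`P_n = (1/(2^n n!)) · dⁿ/dxⁿ [(x² − 1)ⁿ]`. -/
noncomputable def legendreP (n : ℕ) : Polynomial ℝ :=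
  ((1 : ℝ) / (2 ^ n * n.factorial)) • (derivative^[n] ((X ^ 2 - 1) ^ n))


lemma deriv_pow_succ' (N : ℕ) :
    derivative ((X ^ 2 - 1) ^ (N + 1) : Polynomial ℝ) =
      C (2 * ((N : ℝ) + 1)) * (X * (X ^ 2 - 1) ^ N) := by
  rw [derivative_pow_succ, C_mul]
  simp only [derivative_sub, derivative_one, derivative_X_pow]
  push_cast
  ring_nf

lemma legendre_sum_eq (N : ℕ) (hN : 1 ≤ N) :
    legendreP N + legendreP (N + 1) =
      ((1 : ℝ) / (2 ^ N * N.factorial)) • derivative^[N] ((X ^ 2 - 1) ^ N * (X + 1)) := by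
  obtain ⟨M, rfl⟩ : ∃ M, N = M + 1 := ⟨N - 1, by omega⟩
  set N := M + 1
  unfold legendreP
  have h1 : derivative^[N + 1] ((X ^ 2 - 1) ^ (N + 1) : Polynomial ℝ)
      = C (2 * ((N : ℝ) + 1)) * (X * derivative^[N] ((X ^ 2 - 1) ^ N)
        + C ((N : ℕ) : ℝ) * derivative^[M] ((X ^ 2 - 1) ^ N)) := by
    rw [Function.iterate_succ_apply, deriv_pow_succ', iterate_derivative_C_mul,
      iter_deriv_X_mul]
  have h2 : derivative^[N] ((X ^ 2 - 1) ^ N * (X + 1) : Polynomial ℝ)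
      = X * derivative^[N] ((X ^ 2 - 1) ^ N)
        + C ((N : ℕ) : ℝ) * derivative^[M] ((X ^ 2 - 1) ^ N)
        + derivative^[N] ((X ^ 2 - 1) ^ N) := by
    have : ((X ^ 2 - 1) ^ N * (X + 1) : Polynomial ℝ)
        = X * (X ^ 2 - 1) ^ N + (X ^ 2 - 1) ^ N := by ring
    rw [this, iter_deriv_add, iter_deriv_X_mul]
  have hc : (1 : ℝ) / (2 ^ (N + 1) * (N + 1).factorial) * (2 * ((N : ℝ) + 1))
      = 1 / (2 ^ N * N.factorial) := by
    rw [Nat.factorial_succ]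
    push_cast
    have h2N : (2 : ℝ) ^ N ≠ 0 := by positivity
    have hf : ((N.factorial : ℝ)) ≠ 0 := by positivity
    have hN1 : ((N : ℝ) + 1) ≠ 0 := by positivity
    field_simp
    ring
  rw [h1, h2, smul_eq_C_mul, smul_eq_C_mul, smul_eq_C_mul, ← mul_assoc, ← C_mul, hc]
  ring

lemma chain_roots (N : ℕ) : ∀ k, k ≤ N →
    ∃ c : Fin (k + 1) → ℝ, StrictMono c ∧ c 0 = -1 ∧
      (∀ i, c i ∈ Set.Ico (-1 : ℝ) 1) ∧
      ∀ i, (derivative^[k] ((X ^ 2 - 1) ^ N * (X + 1))).eval (c i) = 0 := by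
  intro k
  induction k with
  | zero =>
      intro _
      refine ⟨fun _ => -1, ?_, rfl, ?_, ?_⟩
      · intro a b hab
        have ha := a.isLt
        have hb := b.isLt
        rw [Fin.lt_def] at hab
        omega
      · intro i; constructor <;> norm_num
      · intro i; simp
  | succ k ih =>
      intro hk
      obtain ⟨c, hmono, hc0, hIco, hroot⟩ := ih (by omega)
      set f : Polynomial ℝ := (X ^ 2 - 1) ^ N * (X + 1) with hf
      -- d^k f vanishes at 1
      obtain ⟨g, hg⟩ := factor_iter N k (by omega)
      obtain ⟨a, ha⟩ : ∃ a, N - k = a + 1 := ⟨N - (k + 1), by omega⟩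
      have h1root : (derivative^[k] f).eval 1 = 0 := by
        rw [hg, ha]; simp
      -- d^(k+1) f vanishes at -1
      obtain ⟨g', hg'⟩ := factor_iter N (k + 1) hk
      obtain ⟨b, hb⟩ : ∃ b, N + 1 - (k + 1) = b + 1 := ⟨N - (k + 1), by omega⟩
      have hm1root : (derivative^[k + 1] f).eval (-1) = 0 := by
        rw [hg', hb]; simp
      -- extended chain with 1 appended
      set c' : Fin (k + 2) → ℝ := Fin.snoc c 1 with hc'
      have hc'mono : StrictMono c' := by
        rw [Fin.strictMono_iff_lt_succ]
        intro i
        induction i using Fin.lastCases with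
        | last =>
            rw [hc']
            rw [Fin.succ_last]
            rw [Fin.snoc_castSucc, Fin.snoc_last]
            exact (hIco _).2
        | cast j =>
            rw [hc', Fin.succ_castSucc, Fin.snoc_castSucc, Fin.snoc_castSucc]
            exact hmono (Fin.castSucc_lt_succ : j.castSucc < j.succ)
      have hc'root : ∀ j, (derivative^[k] f).eval (c' j) = 0 := by
        intro j
        induction j using Fin.lastCases with
        | last => rw [hc', Fin.snoc_last]; exact h1root
        | cast j => rw [hc', Fin.snoc_castSucc]; exact hroot j
      have hc'0 : c' 0 = -1 := by
        rw [hc', show (0 : Fin (k + 2)) = Fin.castSucc 0 by rfl, Fin.snoc_castSucc]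
        exact hc0
      have hc'last : c' (Fin.last (k + 1)) = 1 := by rw [hc', Fin.snoc_last]
      -- Rolle on each interval
      have key : ∀ i : Fin (k + 1), ∃ u, u ∈ Set.Ioo (c' i.castSucc) (c' i.succ) ∧
          (derivative^[k + 1] f).eval u = 0 := by
        intro i
        have hab : c' i.castSucc < c' i.succ := hc'mono (Fin.castSucc_lt_succ : i.castSucc < i.succ)
        obtain ⟨u, hu, hdu⟩ := exists_deriv_eq_zero hab
          ((derivative^[k] f).continuousOn)
          ((hc'root i.castSucc).trans (hc'root i.succ).symm)
        refine ⟨u, hu, ?_⟩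
        rw [Function.iterate_succ_apply', ← Polynomial.deriv, hdu]
      choose u hu1 hu2 using key
      refine ⟨Fin.cons (-1) u, ?_, Fin.cons_zero _ _, ?_, ?_⟩
      · rw [Fin.strictMono_iff_lt_succ]
        intro i
        induction i using Fin.cases with
        | zero =>
            rw [Fin.castSucc_zero, Fin.cons_zero, Fin.succ_zero_eq_one,
              show (1 : Fin (k + 2)) = Fin.succ 0 by rfl, Fin.cons_succ]
            calc (-1 : ℝ) = c' (Fin.castSucc 0) := by
                  rw [show Fin.castSucc (0 : Fin (k+1)) = 0 by rfl, hc'0]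
              _ < u 0 := (hu1 0).1
        | succ j =>
            rw [← Fin.succ_castSucc, Fin.cons_succ, Fin.cons_succ]
            calc u j.castSucc < c' j.castSucc.succ := (hu1 j.castSucc).2
              _ = c' j.succ.castSucc := by rw [Fin.succ_castSucc]
              _ < u j.succ := (hu1 j.succ).1
      · intro i
        induction i using Fin.cases with
        | zero => rw [Fin.cons_zero]; constructor <;> norm_num
        | succ j =>
            rw [Fin.cons_succ]
            refine ⟨le_of_lt ?_, ?_⟩
            · calc (-1 : ℝ) = c' 0 := hc'0.symm
                _ ≤ c' j.castSucc := hc'mono.monotone (Fin.zero_le _)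
                _ < u j := (hu1 j).1
            · calc u j < c' j.succ := (hu1 j).2
                _ ≤ c' (Fin.last (k + 1)) := hc'mono.monotone (Fin.le_last _)
                _ = 1 := hc'last
      · intro i
        induction i using Fin.cases with
        | zero => rw [Fin.cons_zero]; exact hm1root
        | succ j => rw [Fin.cons_succ]; exact hu2 j

/-- For every `N ≥ 1`, the polynomial `P_N + P_{N+1}` has `N+1`
pairwise distinct real roots, all lying in `[−1, 1)`; in particular `x = −1` is one
of these roots. -/
theorem legendre_sum_roots (N : ℕ) (hN : 1 ≤ N) :
    ∃ t : Fin (N + 1) → ℝ, Function.Injective t ∧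
      (∀ i, t i ∈ Set.Ico (-1 : ℝ) 1 ∧ (legendreP N + legendreP (N + 1)).eval (t i) = 0) ∧
      ∃ i, t i = -1 := by
  obtain ⟨c, hmono, hc0, hIco, hroot⟩ := chain_roots N N le_rfl
  refine ⟨c, hmono.injective, ?_, ⟨0, hc0⟩⟩
  intro i
  refine ⟨hIco i, ?_⟩
  rw [legendre_sum_eq N hN, smul_eq_C_mul, eval_mul, eval_C, hroot i, mul_zero]
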